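/- Let (X,d) be a metric space, φ : X → ℝ a Kantorovich potential, and γ a φ-Kantorovich geodesic. Then for all s, r ∈ [0,1], φ_s(γ_s) − φ_r(γ_r) = (r − s)·ℓ(γ)²/2; in particular, for s ≠ r this common value equals d(γ_s,γ_r)²/(2(r−s)). -/

import Mathlib

/-- `ψ` is pointwise the `c`-transform of `φ` for the cost `c = d²/2`:
at every point `x`, `ψ x` is a genuine (finite) infimum of `d(x,y)²/2 - φ(y)` over `y`. -/
def IsCTransform {X : Type*} [MetricSpace X] (φ ψ : X → ℝ) : Prop :=
  ∀ x : X, IsGLB {v : ℝ | ∃ y : X, v = dist x y ^ 2 / 2 - φ y} (ψ x)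

/-- `φ` is a Kantorovich potential with (real-valued) conjugate potential `φc`. -/
def IsKantorovichPair {X : Type*} [MetricSpace X] (φ φc : X → ℝ) : Prop :=
  IsCTransform φ φc ∧ IsCTransform φc φ

/-- A constant-speed geodesic parametrized on `[0,1]`. -/
def IsGeodesic {X : Type*} [MetricSpace X] (γ : ℝ → X) : Prop :=
  ∀ s ∈ Set.Icc (0:ℝ) 1, ∀ t ∈ Set.Icc (0:ℝ) 1,
    dist (γ s) (γ t) = |s - t| * dist (γ 0) (γ 1)

/-- A `φ`-Kantorovich geodesic: a geodesic with `φ(γ₀) + φ^c(γ₁) = ℓ(γ)²/2`,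
where `ℓ(γ) = d(γ₀,γ₁)`. -/
def IsKantorovichGeodesic {X : Type*} [MetricSpace X] (φ φc : X → ℝ) (γ : ℝ → X) : Prop :=
  IsGeodesic γ ∧ φ (γ 0) + φc (γ 1) = dist (γ 0) (γ 1) ^ 2 / 2

/-- A metric space is geodesic if every pair of points is joined by a geodesic. -/
def IsGeodesicSpace (X : Type*) [MetricSpace X] : Prop :=
  ∀ x y : X, ∃ γ : ℝ → X, IsGeodesic γ ∧ γ 0 = x ∧ γ 1 = y

/-- The interpolating intermediate-time Kantorovich potential
`φ_t(x) = -inf_y (d(x,y)²/(2t) - φ(y))` for `t ≠ 0`, and `φ_0 = φ`. -/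
noncomputable def interpPotential {X : Type*} [MetricSpace X] (φ : X → ℝ) (t : ℝ) (x : X) : ℝ :=
  if t = 0 then φ x
  else -sInf {v : ℝ | ∃ y : X, v = dist x y ^ 2 / (2 * t) - φ y}

/-- The time-reversed interpolating Kantorovich potential
`φ̄_t(x) = inf_y (d(x,y)²/(2(1-t)) - φ^c(y))` for `t ≠ 1`, and `φ̄_1 = -φ^c`. -/
noncomputable def reversePotential {X : Type*} [MetricSpace X] (φc : X → ℝ) (t : ℝ) (x : X) : ℝ :=
  if t = 1 then -φc x
  else sInf {v : ℝ | ∃ y : X, v = dist x y ^ 2 / (2 * (1 - t)) - φc y}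

lemma key_interp {X : Type*} [MetricSpace X] (φ φc : X → ℝ)
    (hpair : IsKantorovichPair φ φc) (γ : ℝ → X)
    (hγ : IsKantorovichGeodesic φ φc γ)
    (t : ℝ) (ht : t ∈ Set.Icc (0:ℝ) 1) :
    interpPotential φ t (γ t) = φ (γ 0) - t * (dist (γ 0) (γ 1) ^ 2 / 2) := by
  rcases eq_or_ne t 0 with rfl | ht0
  · simp [interpPotential]
  have htpos : 0 < t := lt_of_le_of_ne ht.1 (Ne.symm ht0)
  set L := dist (γ 0) (γ 1) with hL
  have hL0 : 0 ≤ L := dist_nonneg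
  set m : ℝ := t * (L ^ 2 / 2) - φ (γ 0) with hm
  have hlow : ∀ v ∈ {v : ℝ | ∃ y : X, v = dist (γ t) y ^ 2 / (2 * t) - φ y}, m ≤ v := by
    rintro v ⟨y, rfl⟩
    have hφy : φ y ≤ dist y (γ 1) ^ 2 / 2 - φc (γ 1) :=
      (hpair.2 y).1 ⟨γ 1, rfl⟩
    have hsum : φ (γ 0) + φc (γ 1) = L ^ 2 / 2 := hγ.2
    set a := dist (γ t) y with ha
    set a' := dist y (γ 1) with ha'
    have htri : a' ≤ a + (1 - t) * L := by
      have h1 : dist (γ t) (γ 1) = |t - 1| * L := hγ.1 t ht 1 ⟨zero_le_one, le_refl 1⟩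
      have h2 : |t - 1| = 1 - t := by rw [abs_sub_comm]; exact abs_of_nonneg (by linarith [ht.2])
      calc a' ≤ dist y (γ t) + dist (γ t) (γ 1) := dist_triangle _ _ _
        _ = a + (1 - t) * L := by rw [dist_comm y (γ t), h1, h2]
    have ha0 : 0 ≤ a := dist_nonneg
    have ha'0 : 0 ≤ a' := dist_nonneg
    have hsq : a' ^ 2 ≤ (a + (1 - t) * L) ^ 2 := by nlinarith
    have hkey : t * (L ^ 2 / 2) + (a' ^ 2 / 2 - L ^ 2 / 2) ≤ a ^ 2 / (2 * t) := by
      rw [le_div_iff₀ (by positivity : (0:ℝ) < 2 * t)]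
      nlinarith [mul_nonneg (sub_nonneg.2 ht.2) (sq_nonneg (a - t * L))]
    have : φ y ≤ a' ^ 2 / 2 - L ^ 2 / 2 + φ (γ 0) := by linarith
    simp only [hm]; linarith
  have hmem : m ∈ {v : ℝ | ∃ y : X, v = dist (γ t) y ^ 2 / (2 * t) - φ y} := by
    refine ⟨γ 0, ?_⟩
    have h1 : dist (γ t) (γ 0) = |t - 0| * L :=
      hγ.1 t ht 0 ⟨le_refl 0, zero_le_one⟩
    have h2 : |t - 0| = t := by rw [sub_zero]; exact abs_of_nonneg ht.1
    rw [h1, h2, hm]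
    field_simp
  have hsInf : sInf {v : ℝ | ∃ y : X, v = dist (γ t) y ^ 2 / (2 * t) - φ y} = m :=
    le_antisymm (csInf_le ⟨m, hlow⟩ hmem) (le_csInf ⟨m, hmem⟩ hlow)
  rw [interpPotential, if_neg ht0, hsInf, hm]
  ring

/-- For a Kantorovich potential `φ` and a `φ`-Kantorovich geodesic `γ`, for all
`s, r ∈ [0,1]` one has `φ_s(γ_s) - φ_r(γ_r) = (r-s)·ℓ(γ)²/2`; in particular, for
`s ≠ r` this common value equals `d(γ_s,γ_r)²/(2(r-s))`. -/
theorem statement0 {X : Type*} [MetricSpace X] (φ φc : X → ℝ)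
    (hpair : IsKantorovichPair φ φc) (γ : ℝ → X)
    (hγ : IsKantorovichGeodesic φ φc γ)
    (s : ℝ) (hs : s ∈ Set.Icc (0:ℝ) 1) (r : ℝ) (hr : r ∈ Set.Icc (0:ℝ) 1) :
    interpPotential φ s (γ s) - interpPotential φ r (γ r)
        = (r - s) * (dist (γ 0) (γ 1) ^ 2 / 2) ∧
      (s ≠ r →
        interpPotential φ s (γ s) - interpPotential φ r (γ r)
          = dist (γ s) (γ r) ^ 2 / (2 * (r - s))) := by
  have hks := key_interp φ φc hpair γ hγ s hs
  have hkr := key_interp φ φc hpair γ hγ r hr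
  have h1 : interpPotential φ s (γ s) - interpPotential φ r (γ r)
      = (r - s) * (dist (γ 0) (γ 1) ^ 2 / 2) := by
    rw [hks, hkr]; ring
  refine ⟨h1, fun hne => ?_⟩
  have hd : dist (γ s) (γ r) = |s - r| * dist (γ 0) (γ 1) := hγ.1 s hs r hr
  have hrs : r - s ≠ 0 := sub_ne_zero.2 (Ne.symm hne)
  rw [h1, hd, mul_pow, sq_abs]
  field_simp
  ring
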